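/- arXiv:math/0608097 — 7 statements merged into one kernel-verified Lean document; each statement's English description precedes it below -/
import Mathlib

section
/- Let U and V be finite nonempty types, let R be a relation on U × V, and let μ and ν be probability mass functions on U and V respectively. Suppose that for every subset A ⊆ U one has μ(A) ≤ ν({y ∈ V : there exists x ∈ A with R x y}). Then there exists a probability mass function φ on U × V whose first marginal is μ, whose second marginal is ν, and whose support is contained in {(x,y) : R x y}. -/
open Finset

open scoped Classical in
lemma dominance_aux {U V : Type*} [Fintype U] [Fintype V] [Nonempty U]
    (μ : U → ℝ) (ν : V → ℝ) (hμ0 : ∀ x, 0 ≤ μ x) (hν0 : ∀ y, 0 ≤ ν y)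
    (htot : ∑ x, μ x = ∑ y, ν y) :
    ∀ n : ℕ, ∀ (F : U → ℝ) (H : V → ℝ),
      (univ.image F ∪ univ.image H).card ≤ n →
      (∀ t : ℝ, ∑ x ∈ univ.filter (fun x => F x ≤ t), μ x
          ≤ ∑ y ∈ univ.filter (fun y => H y ≤ t), ν y) →
      ∑ y, H y * ν y ≤ ∑ x, F x * μ x := by
  intro n
  induction n with
  | zero =>
    intro F H hcard _
    exfalso
    have h1 : (univ.image F ∪ univ.image H).Nonempty :=
      (Finset.univ_nonempty.image F).mono subset_union_left
    have := Finset.card_pos.2 h1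
    omega
  | succ n ih =>
    intro F H hcard hlev
    set W : Finset ℝ := univ.image F ∪ univ.image H with hW
    have hWne : W.Nonempty := (Finset.univ_nonempty.image F).mono subset_union_left
    set a : ℝ := W.min' hWne with ha
    have hFW : ∀ x, F x ∈ W := fun x =>
      mem_union_left _ (mem_image_of_mem F (mem_univ x))
    have hHW : ∀ y, H y ∈ W := fun y =>
      mem_union_right _ (mem_image_of_mem H (mem_univ y))
    have haF : ∀ x, a ≤ F x := fun x => min'_le _ _ (hFW x)
    have haH : ∀ y, a ≤ H y := fun y => min'_le _ _ (hHW y)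
    by_cases hea : (W.erase a).Nonempty
    · set b : ℝ := (W.erase a).min' hea with hb
      have hbW : b ∈ W.erase a := min'_mem _ _
      have hab : a < b :=
        lt_of_le_of_ne (min'_le _ _ (mem_of_mem_erase hbW)) (Ne.symm (ne_of_mem_erase hbW))
      have hFab : ∀ x, F x = a ∨ b ≤ F x := by
        intro x
        rcases eq_or_ne (F x) a with h | h
        · exact Or.inl h
        · exact Or.inr (min'_le _ _ (mem_erase.2 ⟨h, hFW x⟩))
      have hHab : ∀ y, H y = a ∨ b ≤ H y := by
        intro y
        rcases eq_or_ne (H y) a with h | h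
        · exact Or.inl h
        · exact Or.inr (min'_le _ _ (mem_erase.2 ⟨h, hHW y⟩))
      set F' : U → ℝ := fun x => max (F x) b with hF'
      set H' : V → ℝ := fun y => max (H y) b with hH'
      have hsub : univ.image F' ∪ univ.image H' ⊆ W.erase a := by
        intro t ht
        rcases mem_union.1 ht with h | h
        · obtain ⟨x, -, rfl⟩ := mem_image.1 h
          rcases hFab x with h1 | h1
          · simpa [hF', h1, le_of_lt hab] using hbW
          · have : F' x = F x := by simp [hF', max_eq_left h1]
            rw [this]
            exact mem_erase.2 ⟨by linarith [haF x, hab], hFW x⟩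
        · obtain ⟨y, -, rfl⟩ := mem_image.1 h
          rcases hHab y with h1 | h1
          · simpa [hH', h1, le_of_lt hab] using hbW
          · have : H' y = H y := by simp [hH', max_eq_left h1]
            rw [this]
            exact mem_erase.2 ⟨by linarith [haH y, hab], hHW y⟩
      have hcard' : (univ.image F' ∪ univ.image H').card ≤ n := by
        have h1 : (W.erase a).card < W.card := card_erase_lt_of_mem (min'_mem _ _)
        have h2 := card_le_card hsub
        omega
      have hlev' : ∀ t : ℝ, ∑ x ∈ univ.filter (fun x => F' x ≤ t), μ x
          ≤ ∑ y ∈ univ.filter (fun y => H' y ≤ t), ν y := by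
        intro t
        by_cases hbt : b ≤ t
        · have e1 : univ.filter (fun x => F' x ≤ t) = univ.filter (fun x => F x ≤ t) := by
            apply filter_congr; intro x _; simp [hF', max_le_iff, hbt]
          have e2 : univ.filter (fun y => H' y ≤ t) = univ.filter (fun y => H y ≤ t) := by
            apply filter_congr; intro y _; simp [hH', max_le_iff, hbt]
          rw [e1, e2]; exact hlev t
        · have e1 : univ.filter (fun x => F' x ≤ t) = ∅ := by
            apply filter_false_of_mem; intro x _
            simp only [hF', max_le_iff, not_and]; intro _; exact hbt
          rw [e1]
          simpa using Finset.sum_nonneg (fun y _ => hν0 y)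
      have hIH := ih F' H' hcard' hlev'
      -- sum identities
      have idF : ∑ x, F' x * μ x
          = (∑ x, F x * μ x) + (b - a) * ∑ x ∈ univ.filter (fun x => F x ≤ a), μ x := by
        rw [Finset.sum_filter, Finset.mul_sum, ← Finset.sum_add_distrib]
        apply Finset.sum_congr rfl
        intro x _
        rcases hFab x with h1 | h1
        · have : F' x = b := by simp [hF', h1, le_of_lt hab]
          rw [this, h1]; simp [haF x, h1]; ring
        · have h2 : F' x = F x := by simp [hF', max_eq_left h1]
          have h3 : ¬ F x ≤ a := by linarith
          rw [h2]; simp [h3]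
      have idH : ∑ y, H' y * ν y
          = (∑ y, H y * ν y) + (b - a) * ∑ y ∈ univ.filter (fun y => H y ≤ a), ν y := by
        rw [Finset.sum_filter, Finset.mul_sum, ← Finset.sum_add_distrib]
        apply Finset.sum_congr rfl
        intro y _
        rcases hHab y with h1 | h1
        · have : H' y = b := by simp [hH', h1, le_of_lt hab]
          rw [this, h1]; simp [haH y, h1]; ring
        · have h2 : H' y = H y := by simp [hH', max_eq_left h1]
          have h3 : ¬ H y ≤ a := by linarith
          rw [h2]; simp [h3]
      have hleva := hlev a
      nlinarith [hleva, hab]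
    · -- W = {a} : all values equal a
      have hWa : W = {a} := by
        apply eq_singleton_iff_unique_mem.2
        refine ⟨min'_mem _ _, ?_⟩
        intro t ht
        by_contra h
        exact hea ⟨t, mem_erase.2 ⟨h, ht⟩⟩
      have hFa : ∀ x, F x = a := fun x => mem_singleton.1 (hWa ▸ hFW x)
      have hHa : ∀ y, H y = a := fun y => mem_singleton.1 (hWa ▸ hHW y)
      calc ∑ y, H y * ν y = a * ∑ y, ν y := by
            rw [Finset.mul_sum]; exact Finset.sum_congr rfl fun y _ => by rw [hHa y]
        _ = a * ∑ x, μ x := by rw [htot]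
        _ = ∑ x, F x * μ x := by
            rw [Finset.mul_sum]; exact Finset.sum_congr rfl fun x _ => by rw [hFa x]
        _ ≤ ∑ x, F x * μ x := le_rfl

open Finset

open scoped Classical in
lemma dual_ineq {U V : Type*} [Fintype U] [Fintype V] [Nonempty U] [Nonempty V]
    (R : U → V → Prop) (μ : U → ℝ) (ν : V → ℝ)
    (hμ0 : ∀ x, 0 ≤ μ x) (hμ1 : ∑ x, μ x = 1)
    (hν0 : ∀ y, 0 ≤ ν y) (hν1 : ∑ y, ν y = 1)
    (hcond : ∀ A : Finset U,
      ∑ x ∈ A, μ x ≤ ∑ y ∈ Finset.univ.filter (fun y => ∃ x ∈ A, R x y), ν y)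
    (F : U → ℝ) (G : V → ℝ) (hFG : ∀ x y, R x y → 0 ≤ F x + G y) :
    0 ≤ (∑ x, F x * μ x) + ∑ y, G y * ν y := by
  have hdom := dominance_aux μ ν hμ0 hν0 (by rw [hμ1, hν1])
  set H : V → ℝ := fun y =>
    if h : (univ.filter (fun x => R x y)).Nonempty
    then ((univ.filter (fun x => R x y)).image F).min' (h.image F)
    else (univ.image F).min' (Finset.univ_nonempty.image F) with hHdef
  have hHle : ∀ y x, R x y → H y ≤ F x := by
    intro y x hR
    have hne : (univ.filter (fun x => R x y)).Nonempty := ⟨x, by simp [hR]⟩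
    have : H y = ((univ.filter (fun x => R x y)).image F).min' (hne.image F) := by
      simp [hHdef, hne]
    rw [this]
    exact min'_le _ _ (mem_image_of_mem F (by simp [hR]))
  have hHattain : ∀ y, (univ.filter (fun x => R x y)).Nonempty →
      ∃ x, R x y ∧ H y = F x := by
    intro y hne
    have : H y = ((univ.filter (fun x => R x y)).image F).min' (hne.image F) := by
      simp [hHdef, hne]
    obtain ⟨x, hx, hfx⟩ := mem_image.1 (min'_mem _ (hne.image F))
    exact ⟨x, by simpa using hx, by rw [this, hfx]⟩
  -- unrelated y have ν y = 0
  have hnull : ∀ y, ¬ (∃ x, R x y) → ν y = 0 := by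
    intro y hy
    have h1 : (1:ℝ) ≤ ∑ y ∈ univ.filter (fun y => ∃ x, R x y), ν y := by
      have h := hcond univ
      rw [hμ1] at h
      refine le_trans h (le_of_eq ?_)
      refine Finset.sum_congr (Finset.filter_congr ?_) (fun _ _ => rfl)
      intro y _; simp
    have h2 : ∑ y ∈ univ.filter (fun y => ∃ x, R x y), ν y ≤ ∑ y, ν y :=
      Finset.sum_le_sum_of_subset_of_nonneg (filter_subset _ _) (fun y _ _ => hν0 y)
    rw [hν1] at h2
    have heq : ∑ y ∈ univ.filter (fun y => ∃ x, R x y), ν y = 1 := le_antisymm h2 h1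
    have hsplit := Finset.sum_filter_add_sum_filter_not univ (fun y => ∃ x, R x y) ν
    rw [heq, hν1] at hsplit
    have hzero : ∑ y ∈ univ.filter (fun y => ¬ ∃ x, R x y), ν y = 0 := by linarith
    have hmem : y ∈ univ.filter (fun y => ¬ ∃ x, R x y) := by
      simp only [mem_filter, mem_univ, true_and]; exact hy
    exact (Finset.sum_eq_zero_iff_of_nonneg (fun y _ => hν0 y)).1 hzero y hmem
  have hlev : ∀ t : ℝ, ∑ x ∈ univ.filter (fun x => F x ≤ t), μ x
      ≤ ∑ y ∈ univ.filter (fun y => H y ≤ t), ν y := by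
    intro t
    refine le_trans (hcond (univ.filter (fun x => F x ≤ t))) ?_
    apply Finset.sum_le_sum_of_subset_of_nonneg _ (fun y _ _ => hν0 y)
    intro y hy
    rw [mem_filter] at hy ⊢
    refine ⟨mem_univ y, ?_⟩
    obtain ⟨-, x, hx, hR⟩ := hy
    rw [mem_filter] at hx
    exact le_trans (hHle y x hR) hx.2
  have hdom' := hdom ((univ.image F ∪ univ.image H).card) F H le_rfl hlev
  have hG : ∑ y, (- H y) * ν y ≤ ∑ y, G y * ν y := by
    apply Finset.sum_le_sum
    intro y _
    by_cases hy : ∃ x, R x y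
    · have hne : (univ.filter (fun x => R x y)).Nonempty := by
        obtain ⟨x, hx⟩ := hy; exact ⟨x, by simp [hx]⟩
      obtain ⟨x, hR, hHy⟩ := hHattain y hne
      have := hFG x y hR
      have : -H y ≤ G y := by rw [hHy]; linarith
      exact mul_le_mul_of_nonneg_right this (hν0 y)
    · rw [hnull y hy]; ring_nf; exact le_rfl
  have hsum : ∑ y, (- H y) * ν y = - ∑ y, H y * ν y := by
    rw [← Finset.sum_neg_distrib]; exact Finset.sum_congr rfl fun y _ => by ring
  linarith [hdom', hG, hsum ▸ hG]
lemma strassen_single_smul {W : Type*} [DecidableEq W] (x : W) (g : W → ℝ) :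
    g x • (Pi.single x 1 : W → ℝ) = Pi.single x (g x) := by
  funext j
  by_cases hj : j = x <;> simp [Pi.single_apply, hj]

open scoped Classical in
/-- Strassen-type coupling lemma (Lemma 2.2 of AGLS): if μ, ν are probability
mass functions on finite nonempty types U, V and for every A ⊆ U,
μ(A) ≤ ν({y : ∃ x ∈ A, R x y}), then there is a coupling φ of μ and ν
supported on the relation R. -/
theorem strassen_coupling {U V : Type*} [Fintype U] [Fintype V]
    [Nonempty U] [Nonempty V] (R : U → V → Prop)
    (μ : U → ℝ) (ν : V → ℝ)
    (hμ0 : ∀ x, 0 ≤ μ x) (hμ1 : ∑ x, μ x = 1)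
    (hν0 : ∀ y, 0 ≤ ν y) (hν1 : ∑ y, ν y = 1)
    (hcond : ∀ A : Finset U,
      ∑ x ∈ A, μ x ≤ ∑ y ∈ Finset.univ.filter (fun y => ∃ x ∈ A, R x y), ν y) :
    ∃ φ : U × V → ℝ, (∀ p, 0 ≤ φ p) ∧ (∑ p, φ p = 1) ∧
      (∀ x, ∑ y, φ (x, y) = μ x) ∧
      (∀ y, ∑ x, φ (x, y) = ν y) ∧
      (∀ p, 0 < φ p → R p.1 p.2) := by
  classical
  set T : (U × V → ℝ) → (U → ℝ) × (V → ℝ) :=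
    fun φ => (fun x => ∑ y, φ (x, y), fun y => ∑ x, φ (x, y)) with hT
  set K : Set (U × V → ℝ) :=
    {φ | (∀ p, 0 ≤ φ p) ∧ (∑ p, φ p = 1) ∧ ∀ p, ¬ R p.1 p.2 → φ p = 0} with hK
  set D : Set ((U → ℝ) × (V → ℝ)) := T '' K with hD
  suffices hmem : (μ, ν) ∈ D by
    obtain ⟨φ, hφK, hφT⟩ := hmem
    have h1 : (fun x => ∑ y, φ (x, y)) = μ := congrArg Prod.fst hφT
    have h2 : (fun y => ∑ x, φ (x, y)) = ν := congrArg Prod.snd hφT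
    refine ⟨φ, hφK.1, hφK.2.1, fun x => congrFun h1 x, fun y => congrFun h2 y, ?_⟩
    intro p hp
    by_contra h
    rw [hφK.2.2 p h] at hp
    exact lt_irrefl 0 hp
  by_contra hmem
  -- D is convex
  have hDconv : Convex ℝ D := by
    rintro p ⟨φ, hφ, rfl⟩ q ⟨ψ, hψ, rfl⟩ a b ha hb hab
    refine ⟨a • φ + b • ψ, ⟨?_, ?_, ?_⟩, ?_⟩
    · intro r
      simpa using add_nonneg (mul_nonneg ha (hφ.1 r)) (mul_nonneg hb (hψ.1 r))
    · simp only [Pi.add_apply, Pi.smul_apply, smul_eq_mul, Finset.sum_add_distrib,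
        ← Finset.mul_sum, hφ.2.1, hψ.2.1]
      linarith
    · intro r hr
      simp [hφ.2.2 r hr, hψ.2.2 r hr]
    · have : a • T φ + b • T ψ = T (a • φ + b • ψ) := by
        simp only [hT, Prod.smul_mk, Prod.mk_add_mk, Prod.mk.injEq]
        constructor <;> funext z <;>
          simp [Finset.sum_add_distrib, Finset.mul_sum]
      rw [← this]
  -- K is closed
  have hKc : IsClosed K := by
    have e : K = (⋂ p, {φ : U × V → ℝ | 0 ≤ φ p}) ∩ {φ | ∑ p, φ p = 1}
        ∩ ⋂ p, {φ : U × V → ℝ | ¬ R p.1 p.2 → φ p = 0} := by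
      ext φ
      simp only [hK, Set.mem_inter_iff, Set.mem_iInter, Set.mem_setOf_eq]
      tauto
    rw [e]
    refine IsClosed.inter (IsClosed.inter (isClosed_iInter fun p =>
      isClosed_le continuous_const (continuous_apply p))
      (isClosed_eq (continuous_finset_sum _ fun q _ => continuous_apply q) continuous_const))
      (isClosed_iInter fun p => ?_)
    by_cases hp : R p.1 p.2
    · simp only [hp, not_true_eq_false, false_implies, Set.setOf_true]
      exact isClosed_univ
    · simp only [hp, not_false_eq_true, true_implies]
      exact isClosed_eq (continuous_apply p) continuous_const
  -- K is compact
  have hKcomp : IsCompact K := by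
    have hpi : IsCompact (Set.pi Set.univ fun _ : U × V => Set.Icc (0:ℝ) 1) :=
      isCompact_univ_pi fun _ => isCompact_Icc
    refine IsCompact.of_isClosed_subset hpi hKc ?_
    intro φ hφ
    intro p _
    refine ⟨hφ.1 p, ?_⟩
    rw [← hφ.2.1]
    exact Finset.single_le_sum (fun i _ => hφ.1 i) (Finset.mem_univ p)
  have hTcont : Continuous T := by
    refine Continuous.prodMk ?_ ?_
    · exact continuous_pi fun x => continuous_finset_sum _ fun y _ => continuous_apply (x, y)
    · exact continuous_pi fun y => continuous_finset_sum _ fun x _ => continuous_apply (x, y)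
  have hDclosed : IsClosed D := (hKcomp.image hTcont).isClosed
  obtain ⟨f, u, hfD, hfμν⟩ := geometric_hahn_banach_closed_point hDconv hDclosed hmem
  set F : U → ℝ := fun x => f ((Pi.single x 1 : U → ℝ), (0 : V → ℝ)) with hF
  set G : V → ℝ := fun y => f ((0 : U → ℝ), (Pi.single y 1 : V → ℝ)) with hG
  have hrep : ∀ (g : U → ℝ) (h : V → ℝ),
      f (g, h) = ∑ x, g x * F x + ∑ y, h y * G y := by
    intro g h
    have hgh : ((g, h) : (U → ℝ) × (V → ℝ)) = ((g, (0 : V → ℝ)) : (U → ℝ) × (V → ℝ))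
        + (((0 : U → ℝ), h) : (U → ℝ) × (V → ℝ)) := by
      rw [Prod.mk_add_mk, add_zero, zero_add]
    have hg : ((g, (0 : V → ℝ)) : (U → ℝ) × (V → ℝ))
        = ∑ x, (((Pi.single x (g x) : U → ℝ), (0 : V → ℝ)) : (U → ℝ) × (V → ℝ)) := by
      apply Prod.ext
      · rw [Prod.fst_sum]
        exact (Finset.univ_sum_single g).symm
      · rw [Prod.snd_sum]
        simp
    have hh : (((0 : U → ℝ), h) : (U → ℝ) × (V → ℝ))
        = ∑ y, (((0 : U → ℝ), (Pi.single y (h y) : V → ℝ)) : (U → ℝ) × (V → ℝ)) := by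
      apply Prod.ext
      · rw [Prod.fst_sum]
        simp
      · rw [Prod.snd_sum]
        exact (Finset.univ_sum_single h).symm
    rw [hgh, map_add, hg, hh, map_sum, map_sum]
    congr 1
    · refine Finset.sum_congr rfl fun x _ => ?_
      have : (((Pi.single x (g x) : U → ℝ), (0 : V → ℝ)) : (U → ℝ) × (V → ℝ))
          = g x • (((Pi.single x 1 : U → ℝ), (0 : V → ℝ)) : (U → ℝ) × (V → ℝ)) := by
        rw [Prod.smul_mk, smul_zero, strassen_single_smul]
      rw [this, map_smul, smul_eq_mul]
    · refine Finset.sum_congr rfl fun y _ => ?_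
      have : (((0 : U → ℝ), (Pi.single y (h y) : V → ℝ)) : (U → ℝ) × (V → ℝ))
          = h y • (((0 : U → ℝ), (Pi.single y 1 : V → ℝ)) : (U → ℝ) × (V → ℝ)) := by
        rw [Prod.smul_mk, smul_zero, strassen_single_smul]
      rw [this, map_smul, smul_eq_mul]
  -- evaluate f on the relation points
  have hpoint : ∀ x y, R x y → F x + G y < u := by
    intro x y hR
    set φ : U × V → ℝ := fun p => if p = (x, y) then 1 else 0 with hφ
    have hφK : φ ∈ K := by
      refine ⟨fun p => by positivity, by simp [hφ], ?_⟩
      intro p hp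
      have : p ≠ (x, y) := by
        rintro rfl
        exact hp hR
      simp [hφ, this]
    have hTφ : T φ = ((Pi.single x 1 : U → ℝ), (Pi.single y 1 : V → ℝ)) := by
      apply Prod.ext
      · funext x'
        simp only [hT]
        by_cases hx : x' = x
        · subst hx
          simp [hφ, Prod.ext_iff, Pi.single_apply]
        · rw [show ∑ y', φ (x', y') = 0 from
            Finset.sum_eq_zero fun y' _ => by simp [hφ, Prod.ext_iff, hx]]
          simp [Pi.single_apply, hx]
      · funext y'
        simp only [hT]
        by_cases hy : y' = y
        · subst hy
          simp [hφ, Prod.ext_iff, Pi.single_apply]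
        · rw [show ∑ x', φ (x', y') = 0 from
            Finset.sum_eq_zero fun x' _ => by simp [hφ, Prod.ext_iff, hy]]
          simp [Pi.single_apply, hy]
    have hmem' : ((Pi.single x 1 : U → ℝ), (Pi.single y 1 : V → ℝ)) ∈ D :=
      ⟨φ, hφK, hTφ⟩
    have hlt := hfD _ hmem'
    have heval : f ((Pi.single x 1 : U → ℝ), (Pi.single y 1 : V → ℝ)) = F x + G y := by
      rw [hrep]
      congr 1
      · rw [Finset.sum_eq_single x (fun x' _ hx' => by simp [Pi.single_apply, hx'])
          (fun h => absurd (Finset.mem_univ x) h)]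
        simp
      · rw [Finset.sum_eq_single y (fun y' _ hy' => by simp [Pi.single_apply, hy'])
          (fun h => absurd (Finset.mem_univ y) h)]
        simp
    rw [heval] at hlt
    exact hlt
  have hkey := dual_ineq R μ ν hμ0 hμ1 hν0 hν1 hcond (fun x => u - F x) (fun y => - G y)
    (fun x y hR => by have := hpoint x y hR; linarith)
  have e1 : ∑ x, (u - F x) * μ x = u - ∑ x, F x * μ x := by
    rw [show ∑ x, (u - F x) * μ x = ∑ x, (u * μ x - F x * μ x) from
      Finset.sum_congr rfl fun x _ => by ring]
    rw [Finset.sum_sub_distrib, ← Finset.mul_sum, hμ1, mul_one]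
  have e2 : ∑ y, (- G y) * ν y = - ∑ y, G y * ν y := by
    rw [show ∑ y, (- G y) * ν y = ∑ y, -(G y * ν y) from
      Finset.sum_congr rfl fun y _ => by ring]
    rw [Finset.sum_neg_distrib]
  rw [e1, e2] at hkey
  have hfval : f (μ, ν) = ∑ x, μ x * F x + ∑ y, ν y * G y := hrep μ ν
  have c1 : ∑ x, μ x * F x = ∑ x, F x * μ x :=
    Finset.sum_congr rfl fun x _ => mul_comm _ _
  have c2 : ∑ y, ν y * G y = ∑ y, G y * ν y :=
    Finset.sum_congr rfl fun y _ => mul_comm _ _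
  rw [c1, c2] at hfval
  linarith [hfμν, hfval ▸ hfμν]
end

section
/- Define w : [0, 3/2] → ℝ by w(t) = 5/4 − (3/4)·exp(2(1 − √(1+2t))) − (1/2)·√(1+2t). Then w(0) = 0, w is differentiable on [0, 3/2] with w'(t) = 2(1 − w(t))/√(1+2t) − 1 for all t ∈ [0, 3/2], and w(3/2) = 1/4 − 3/(4e²). -/
/-- The function w(t) = 5/4 − (3/4)e^{2(1−√(1+2t))} − (1/2)√(1+2t) satisfies
w(0) = 0, solves w' = 2(1−w)/√(1+2t) − 1 on [0, 3/2], and w(3/2) = 1/4 − 3/(4e²). -/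
theorem w_solution_K_zero (w : ℝ → ℝ)
    (hw : ∀ t, w t = 5/4 - (3/4) * Real.exp (2 * (1 - Real.sqrt (1 + 2 * t)))
        - (1/2) * Real.sqrt (1 + 2 * t)) :
    w 0 = 0 ∧
      (∀ t ∈ Set.Icc (0:ℝ) (3/2),
        HasDerivAt w (2 * (1 - w t) / Real.sqrt (1 + 2 * t) - 1) t) ∧
      w (3/2) = 1/4 - 3 / (4 * Real.exp 2) := by
  refine ⟨?_, ?_, ?_⟩
  · rw [hw]
    norm_num [Real.sqrt_one]
  · intro t ht
    have hpos : (0:ℝ) < 1 + 2 * t := by nlinarith [ht.1]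
    set s := Real.sqrt (1 + 2 * t) with hs
    have hspos : 0 < s := Real.sqrt_pos.mpr hpos
    have hsq : s ^ 2 = 1 + 2 * t := Real.sq_sqrt hpos.le
    have h1 : HasDerivAt (fun x : ℝ => 1 + 2 * x) 2 t := by
      simpa using ((hasDerivAt_id t).const_mul 2).const_add 1
    have h2 : HasDerivAt (fun x : ℝ => Real.sqrt (1 + 2 * x)) (2 / (2 * s)) t :=
      h1.sqrt (by positivity)
    have h3 : HasDerivAt (fun x : ℝ => 2 * (1 - Real.sqrt (1 + 2 * x)))
        (2 * (0 - 2 / (2 * s))) t := ((hasDerivAt_const t (1:ℝ)).sub h2).const_mul 2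
    have h4 := h3.exp
    have h5 : HasDerivAt (fun x : ℝ =>
        5/4 - (3/4) * Real.exp (2 * (1 - Real.sqrt (1 + 2 * x)))
          - (1/2) * Real.sqrt (1 + 2 * x))
        (0 - (3/4) * (Real.exp (2 * (1 - s)) * (2 * (0 - 2 / (2 * s))))
          - (1/2) * (2 / (2 * s))) t :=
      (((hasDerivAt_const t (5/4:ℝ)).sub (h4.const_mul (3/4))).sub (h2.const_mul (1/2)))
    have heq : (fun x : ℝ =>
        5/4 - (3/4) * Real.exp (2 * (1 - Real.sqrt (1 + 2 * x)))
          - (1/2) * Real.sqrt (1 + 2 * x)) = w := by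
      funext x; rw [hw x]
    rw [heq] at h5
    convert h5 using 1
    rw [hw t]
    field_simp
    ring
  · rw [hw]
    have : Real.sqrt (1 + 2 * (3/2 : ℝ)) = 2 := by
      rw [show (1 + 2 * (3/2 : ℝ)) = 4 by norm_num]
      rw [show (4:ℝ) = 2^2 by norm_num, Real.sqrt_sq (by norm_num)]
    rw [this]
    norm_num [Real.exp_neg]
    field_simp
    ring
end

section
/- Let K ≥ 1 and b > 0, and let y, z : [0, b) → ℝ be differentiable functions with y(0) = 1, z(0) = 1, 0 ≤ y(t) ≤ 1 for all t ∈ [0, b), satisfying y'(t) = −y(t)/(1 + (K−1)(1−y(t))²) and z'(t) = (z(t)² + (K−1)(z(t)−y(t))²)/(1 + (K−1)(1−y(t))²) for all t ∈ [0, b). Then z(t) ≥ 1/(1 − t) for all t ∈ [0, min(b, 1)), and consequently b ≤ 1. -/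
/-- For K ≥ 1, if y and z solve the isolated-vertex and susceptibility ODEs of the
biased process G∧_K on [0, b) with y(0) = z(0) = 1 and 0 ≤ y ≤ 1, then
z(t) ≥ 1/(1−t) on [0, min(b,1)), and consequently b ≤ 1. -/
theorem singularity_le_one_K_ge_one (K b : ℝ) (hK : 1 ≤ K) (hb : 0 < b)
    (y z : ℝ → ℝ) (hy0 : y 0 = 1) (hz0 : z 0 = 1)
    (hyb : ∀ t ∈ Set.Ico (0:ℝ) b, 0 ≤ y t ∧ y t ≤ 1)
    (hyd : ∀ t ∈ Set.Ico (0:ℝ) b,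
      HasDerivWithinAt y (-(y t) / (1 + (K - 1) * (1 - y t) ^ 2)) (Set.Ico 0 b) t)
    (hzd : ∀ t ∈ Set.Ico (0:ℝ) b,
      HasDerivWithinAt z
        ((z t ^ 2 + (K - 1) * (z t - y t) ^ 2) / (1 + (K - 1) * (1 - y t) ^ 2))
        (Set.Ico 0 b) t) :
    (∀ t ∈ Set.Ico (0:ℝ) (min b 1), 1 / (1 - t) ≤ z t) ∧ b ≤ 1 := by
  have hconv : Convex ℝ (Set.Ico (0:ℝ) b) := convex_Ico 0 b
  have hint : interior (Set.Ico (0:ℝ) b) = Set.Ioo 0 b := interior_Ico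
  have hD : ∀ t ∈ Set.Ico (0:ℝ) b, (0:ℝ) < 1 + (K - 1) * (1 - y t) ^ 2 := by
    intro t ht; nlinarith [sq_nonneg (1 - y t)]
  have hzc : ContinuousOn z (Set.Ico 0 b) := fun t ht => (hzd t ht).continuousWithinAt
  have hdz : ∀ x ∈ Set.Ioo (0:ℝ) b, HasDerivAt z
      ((z x ^ 2 + (K - 1) * (z x - y x) ^ 2) / (1 + (K - 1) * (1 - y x) ^ 2)) x := by
    intro x hx
    exact (hzd x (Set.Ioo_subset_Ico_self hx)).hasDerivAt (Ico_mem_nhds hx.1 hx.2)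
  -- z is monotone on [0,b)
  have hmono : MonotoneOn z (Set.Ico (0:ℝ) b) := by
    apply monotoneOn_of_deriv_nonneg hconv hzc
    · rw [hint]; intro x hx
      exact (hdz x hx).differentiableAt.differentiableWithinAt
    · rw [hint]; intro x hx
      rw [(hdz x hx).deriv]
      apply div_nonneg
      · nlinarith [sq_nonneg (z x), sq_nonneg (z x - y x)]
      · exact le_of_lt (hD x (Set.Ioo_subset_Ico_self hx))
  have h0mem : (0:ℝ) ∈ Set.Ico (0:ℝ) b := ⟨le_refl 0, hb⟩
  have hz1 : ∀ t ∈ Set.Ico (0:ℝ) b, 1 ≤ z t := by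
    intro t ht
    have := hmono h0mem ht ht.1
    rwa [hz0] at this
  -- key inequality z' ≥ z²
  have hkey : ∀ t ∈ Set.Ico (0:ℝ) b,
      z t ^ 2 ≤ (z t ^ 2 + (K - 1) * (z t - y t) ^ 2) / (1 + (K - 1) * (1 - y t) ^ 2) := by
    intro t ht
    rw [le_div_iff₀ (hD t ht)]
    obtain ⟨hy1, hy2⟩ := hyb t ht
    have hz := hz1 t ht
    have h1 : (0:ℝ) ≤ 2 * z t - y t - z t * y t := by nlinarith
    have h2 : (0:ℝ) ≤ (K - 1) * (y t * (z t - 1)) * (2 * z t - y t - z t * y t) := by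
      apply mul_nonneg (mul_nonneg (by linarith) (mul_nonneg hy1 (by linarith))) h1
    nlinarith [h2]
  -- h = 1/z + t is antitone
  set h : ℝ → ℝ := fun t => (z t)⁻¹ + t with hh
  have hanti : AntitoneOn h (Set.Ico (0:ℝ) b) := by
    apply antitoneOn_of_deriv_nonpos hconv
    · apply ContinuousOn.add
      · exact hzc.inv₀ (fun t ht => by have := hz1 t ht; linarith)
      · exact continuousOn_id
    · rw [hint]; intro x hx
      have hne : z x ≠ 0 := by have := hz1 x (Set.Ioo_subset_Ico_self hx); linarith
      exact (((hdz x hx).inv hne).add (hasDerivAt_id x)).differentiableAt.differentiableWithinAt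
    · rw [hint]; intro x hx
      have hx' := Set.Ioo_subset_Ico_self hx
      have hzx := hz1 x hx'
      have hne : z x ≠ 0 := by linarith
      have hd : HasDerivAt h
          (-((z x ^ 2 + (K - 1) * (z x - y x) ^ 2) / (1 + (K - 1) * (1 - y x) ^ 2)) / z x ^ 2
            + 1) x := ((hdz x hx).inv hne).add (hasDerivAt_id x)
      rw [hd.deriv]
      have hz2 : (0:ℝ) < z x ^ 2 := by positivity
      have : 1 ≤ ((z x ^ 2 + (K - 1) * (z x - y x) ^ 2) / (1 + (K - 1) * (1 - y x) ^ 2)) / z x ^ 2 :=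
        (one_le_div hz2).2 (hkey x hx')
      rw [neg_div]
      linarith
  -- main bound
  have hmain : ∀ t ∈ Set.Ico (0:ℝ) (min b 1), 1 / (1 - t) ≤ z t := by
    intro t ht
    obtain ⟨ht0, ht1⟩ := ht
    have htb : t < b := lt_of_lt_of_le ht1 (min_le_left b 1)
    have ht1' : t < 1 := lt_of_lt_of_le ht1 (min_le_right b 1)
    have htm : t ∈ Set.Ico (0:ℝ) b := ⟨ht0, htb⟩
    have hzt := hz1 t htm
    have := hanti h0mem htm ht0
    have h0v : h 0 = 1 := by simp [hh, hz0]
    rw [h0v] at this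
    have hinv : (z t)⁻¹ ≤ 1 - t := by
      have : (z t)⁻¹ + t ≤ 1 := this
      linarith
    rw [div_le_iff₀ (by linarith : (0:ℝ) < 1 - t)]
    have h4 : z t * (z t)⁻¹ ≤ z t * (1 - t) :=
      mul_le_mul_of_nonneg_left hinv (by linarith)
    rw [mul_inv_cancel₀ (by linarith : z t ≠ 0)] at h4
    exact h4
  refine ⟨hmain, ?_⟩
  -- now b ≤ 1
  by_contra hb1
  push_neg at hb1
  have h1mem : (1:ℝ) ∈ Set.Ico (0:ℝ) b := ⟨by norm_num, hb1⟩
  set M := z 1 with hM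
  have hM1 : 1 ≤ M := hz1 1 h1mem
  set t := 1 - 1 / (M + 1) with htdef
  have hMpos : (0:ℝ) < M + 1 := by linarith
  have hfrac : 1 / (M + 1) ≤ 1 / 2 := by
    apply one_div_le_one_div_of_le <;> linarith
  have hfrac' : (0:ℝ) < 1 / (M + 1) := by positivity
  have ht0 : (0:ℝ) ≤ t := by rw [htdef]; linarith
  have ht1 : t < 1 := by rw [htdef]; linarith
  have htmem : t ∈ Set.Ico (0:ℝ) (min b 1) := ⟨ht0, lt_min (by linarith) ht1⟩
  have hle := hmain t htmem
  have hzM : z t ≤ M := hmono ⟨ht0, by linarith⟩ h1mem (by linarith)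
  have : 1 / (1 - t) = M + 1 := by
    rw [htdef]
    field_simp
    ring
  rw [this] at hle
  linarith
end

section
/- Let 0 < K < 1 and let y, z be real numbers with 0 ≤ y ≤ 1, z ≥ 1, and (1−K)·y·(2−y) ≤ K. Then (z² + (K−1)(z−y)²)/(1 + (K−1)(1−y)²) ≥ z²/2. -/
/-- For 0 < K < 1, 0 ≤ y ≤ 1, z ≥ 1 and (1−K)y(2−y) ≤ K, the right-hand side of
the susceptibility ODE is at least z²/2. -/
theorem susceptibility_rhs_ge_half_sq (K y z : ℝ) (hK0 : 0 < K) (hK1 : K < 1)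
    (hy0 : 0 ≤ y) (hy1 : y ≤ 1) (hz : 1 ≤ z)
    (hyK : (1 - K) * y * (2 - y) ≤ K) :
    z ^ 2 / 2 ≤ (z ^ 2 + (K - 1) * (z - y) ^ 2) / (1 + (K - 1) * (1 - y) ^ 2) := by
  have hden : 0 < 1 + (K - 1) * (1 - y) ^ 2 := by nlinarith [mul_nonneg (mul_nonneg (by linarith : (0:ℝ) ≤ 1 - K) hy0) (by linarith : (0:ℝ) ≤ 2 - y)]
  rw [div_le_div_iff₀ (by norm_num) hden]
  have h1 : z ^ 2 * ((1 - K) * y * (2 - y)) ≤ z ^ 2 * K :=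
    mul_le_mul_of_nonneg_left hyK (sq_nonneg z)
  have h2 : 0 ≤ (1 - K) * (y * (2 * z - y)) :=
    mul_nonneg (by linarith) (mul_nonneg hy0 (by linarith))
  nlinarith [h1, h2]
end

section
/- Let 0 < K < 1 and b > 0, and let u : [0, b) → ℝ be differentiable with u(0) = 0, u'(t) = (1 − u(t))/(1 − (1−K)·u(t)²) for all t ∈ [0, b), and 0 ≤ u(t) < √(1−K) for all t ∈ [0, b). Then b ≤ √(1−K) + (1−K)/2 + (1−K)^{3/2}/3 + (1−K)²/4, and this bound is at most 25/12. -/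
/-- For 0 < K < 1, if u solves u' = (1−u)/(1−(1−K)u²) on [0, b) with u(0) = 0 and
0 ≤ u < √(1−K) there, then b ≤ √(1−K) + (1−K)/2 + (1−K)^{3/2}/3 + (1−K)²/4 ≤ 25/12. -/
theorem tstar_bound (K b : ℝ) (hK0 : 0 < K) (hK1 : K < 1) (hb : 0 < b)
    (u : ℝ → ℝ) (hu0 : u 0 = 0)
    (hud : ∀ t ∈ Set.Ico (0:ℝ) b,
      HasDerivWithinAt u ((1 - u t) / (1 - (1 - K) * u t ^ 2)) (Set.Ico 0 b) t)
    (hur : ∀ t ∈ Set.Ico (0:ℝ) b, 0 ≤ u t ∧ u t < Real.sqrt (1 - K)) :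
    b ≤ Real.sqrt (1 - K) + (1 - K) / 2 + (1 - K) ^ ((3:ℝ)/2) / 3 + (1 - K) ^ 2 / 4 ∧
      Real.sqrt (1 - K) + (1 - K) / 2 + (1 - K) ^ ((3:ℝ)/2) / 3 + (1 - K) ^ 2 / 4
        ≤ 25 / 12 := by
  set a : ℝ := 1 - K with ha
  have ha0 : 0 < a := by linarith
  have ha1 : a < 1 := by linarith
  set s : ℝ := Real.sqrt a with hs
  have hs0 : 0 < s := Real.sqrt_pos.2 ha0
  have hs2 : s ^ 2 = a := Real.sq_sqrt ha0.le
  have hs1 : s < 1 := by nlinarith [hs2]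
  -- the antiderivative, as an opaque function
  obtain ⟨F, hF⟩ : ∃ F : ℝ → ℝ, F = fun x => x + x ^ 2 / 2 + x ^ 3 / 3 + x ^ 4 / 4 := ⟨_, rfl⟩
  obtain ⟨φ, hφ⟩ : ∃ φ : ℝ → ℝ, φ = fun t => F (u t) - t := ⟨_, rfl⟩
  -- u t ^ 2 < a on the interval
  have hsq : ∀ t ∈ Set.Ico (0:ℝ) b, u t ^ 2 < a := by
    intro t ht
    obtain ⟨h0, h1⟩ := hur t ht
    nlinarith [hs2]
  -- derivative at interior points
  have hderiv : ∀ x ∈ Set.Ioo (0:ℝ) b, HasDerivAt φ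
      ((1 + u x + u x ^ 2 + u x ^ 3) * ((1 - u x) / (1 - a * u x ^ 2)) - 1) x := by
    intro x hx
    have hmem : x ∈ Set.Ico (0:ℝ) b := ⟨hx.1.le, hx.2⟩
    have hnhds : Set.Ico (0:ℝ) b ∈ nhds x :=
      mem_nhds_iff.2 ⟨Set.Ioo 0 b, Set.Ioo_subset_Ico_self, isOpen_Ioo, hx⟩
    have hu : HasDerivAt u ((1 - u x) / (1 - a * u x ^ 2)) x :=
      (hud x hmem).hasDerivAt hnhds
    set d : ℝ := (1 - u x) / (1 - a * u x ^ 2) with hd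
    have h2 : HasDerivAt (fun t => u t ^ 2) (2 * u x ^ 1 * d) x := hu.pow 2
    have h3 : HasDerivAt (fun t => u t ^ 3) (3 * u x ^ 2 * d) x := hu.pow 3
    have h4 : HasDerivAt (fun t => u t ^ 4) (4 * u x ^ 3 * d) x := hu.pow 4
    have hid : HasDerivAt (fun t : ℝ => t) 1 x := hasDerivAt_id x
    have hsum := ((hu.add (h2.div_const 2)).add (h3.div_const 3)).add (h4.div_const 4)
    have hfin := hsum.sub hid
    simp only [hφ, hF]
    exact hfin.congr_deriv (by ring)
  -- φ is monotone on [0, b)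
  have hmono : MonotoneOn φ (Set.Ico 0 b) := by
    apply monotoneOn_of_deriv_nonneg (convex_Ico 0 b)
    · intro t ht
      have hc := (hud t ht).continuousWithinAt
      have hkey : ContinuousWithinAt
          (fun y => u y + u y ^ 2 / 2 + u y ^ 3 / 3 + u y ^ 4 / 4 - y) (Set.Ico 0 b) t :=
        ((((hc.add ((hc.pow 2).div_const 2)).add ((hc.pow 3).div_const 3)).add
          ((hc.pow 4).div_const 4)).sub continuousWithinAt_id)
      simpa only [hφ, hF] using hkey
    · rw [interior_Ico]
      intro x hx
      exact (hderiv x hx).differentiableAt.differentiableWithinAt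
    · rw [interior_Ico]
      intro x hx
      rw [(hderiv x hx).deriv]
      have hmem : x ∈ Set.Ico (0:ℝ) b := ⟨hx.1.le, hx.2⟩
      obtain ⟨h0, h1⟩ := hur x hmem
      have hq := hsq x hmem
      have hden : 0 < 1 - a * u x ^ 2 := by nlinarith
      have key : (1 + u x + u x ^ 2 + u x ^ 3) * ((1 - u x) / (1 - a * u x ^ 2))
          = (1 - u x ^ 4) / (1 - a * u x ^ 2) := by
        field_simp
        ring
      rw [key]
      have hle : 1 - a * u x ^ 2 ≤ 1 - u x ^ 4 := by nlinarith
      have := (one_le_div hden).2 hle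
      linarith
  -- hence t ≤ F (u t) ≤ F s for t ∈ [0, b)
  have hFs : ∀ t ∈ Set.Ico (0:ℝ) b, t ≤ F s := by
    intro t ht
    have h0 : (0:ℝ) ∈ Set.Ico (0:ℝ) b := ⟨le_refl 0, hb⟩
    have hm := hmono h0 ht ht.1
    have hφ0 : φ 0 = 0 := by simp [hφ, hF, hu0]
    rw [hφ0] at hm
    have htF : t ≤ F (u t) := by
      have : 0 ≤ F (u t) - t := by simpa [hφ] using hm
      linarith
    obtain ⟨hu0', hu1'⟩ := hur t ht
    have hFm : F (u t) ≤ F s := by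
      simp only [hF]
      gcongr
    linarith
  have hbF : b ≤ F s := by
    by_contra h
    push_neg at h
    have hFs0 : 0 ≤ F s := by rw [hF]; positivity
    have hmid : (F s + b) / 2 ∈ Set.Ico (0:ℝ) b := ⟨by linarith, by linarith⟩
    have := hFs _ hmid
    linarith
  have hs3 : s ^ 3 = a ^ ((3:ℝ)/2) := by
    rw [hs, Real.sqrt_eq_rpow, ← Real.rpow_natCast (a ^ ((1:ℝ)/2)) 3,
      ← Real.rpow_mul ha0.le]
    norm_num
  have hs4 : s ^ 4 = a ^ 2 := by nlinarith [hs2]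
  have hFsval : F s = s + a / 2 + a ^ ((3:ℝ)/2) / 3 + a ^ 2 / 4 := by
    rw [hF]
    simp only
    rw [hs2, hs3, hs4]
  clear_value a s
  constructor
  · rw [← hFsval]; exact hbF
  · have h1 : s ≤ 1 := hs1.le
    have h2 : a ≤ 1 := ha1.le
    have h3 : a ^ ((3:ℝ)/2) ≤ 1 := Real.rpow_le_one ha0.le ha1.le (by norm_num)
    have h4 : a ^ 2 ≤ 1 := by nlinarith
    linarith
end

section
/- Let K > 0 and b > 0, and let y, z : [0, b) → ℝ be differentiable functions with y(0) = 1, z(0) = 1, 0 ≤ y(t) ≤ 1 for all t ∈ [0, b), satisfying y'(t) = −y(t)/(1 + (K−1)(1−y(t))²) and z'(t) = (z(t)² + (K−1)(z(t)−y(t))²)/(1 + (K−1)(1−y(t))²) for all t ∈ [0, b). Then b < 5. -/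
open Set Real Filter Topology

lemma monoOn_Icc_of_hasDeriv {a c : ℝ} {f f' : ℝ → ℝ}
    (hd : ∀ t ∈ Set.Icc a c, HasDerivWithinAt f (f' t) (Set.Icc a c) t)
    (h0 : ∀ t ∈ Set.Ioo a c, 0 ≤ f' t) : MonotoneOn f (Set.Icc a c) := by
  apply monotoneOn_of_deriv_nonneg (convex_Icc a c)
    (fun t ht => (hd t ht).continuousWithinAt)
  · rw [interior_Icc]
    intro x hx
    exact ((hd x (Ioo_subset_Icc_self hx)).hasDerivAt
      (Icc_mem_nhds hx.1 hx.2)).differentiableAt.differentiableWithinAt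
  · rw [interior_Icc]
    intro x hx
    rw [((hd x (Ioo_subset_Icc_self hx)).hasDerivAt (Icc_mem_nhds hx.1 hx.2)).deriv]
    exact h0 x hx

lemma stay_nonneg {b C : ℝ} {u u' : ℝ → ℝ}
    (hd : ∀ t ∈ Set.Ico (0:ℝ) b, HasDerivWithinAt u (u' t) (Set.Ico 0 b) t)
    (h0 : 0 ≤ u 0)
    (h : ∀ t ∈ Set.Ico (0:ℝ) b, u t ≤ 0 → C * u t ≤ u' t) :
    ∀ t ∈ Set.Ico (0:ℝ) b, 0 ≤ u t := by
  intro t₁ ht₁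
  by_contra hneg
  push_neg at hneg
  have hb0 : (0:ℝ) < b := lt_of_le_of_lt ht₁.1 ht₁.2
  have hIcc : Set.Icc (0:ℝ) t₁ ⊆ Set.Ico 0 b := fun x hx =>
    ⟨hx.1, lt_of_le_of_lt hx.2 ht₁.2⟩
  have hcont : ContinuousOn u (Set.Icc 0 t₁) := fun x hx =>
    ((hd x (hIcc hx)).continuousWithinAt).mono hIcc
  -- the set where u ≥ 0
  set S : Set ℝ := Set.Icc 0 t₁ ∩ u ⁻¹' Set.Ici 0 with hS
  have hSne : S.Nonempty := ⟨0, ⟨le_refl 0, ht₁.1⟩, h0⟩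
  have hScl : IsClosed S := hcont.preimage_isClosed_of_isClosed isClosed_Icc isClosed_Ici
  have hSbd : BddAbove S := BddAbove.mono (Set.inter_subset_left) bddAbove_Icc
  set s₀ := sSup S with hs₀def
  have hs₀S : s₀ ∈ S := hScl.csSup_mem hSne hSbd
  have hs₀Icc : s₀ ∈ Set.Icc 0 t₁ := hs₀S.1
  have hus₀ : 0 ≤ u s₀ := hs₀S.2
  have hs₀lt : s₀ < t₁ := by
    rcases lt_or_eq_of_le hs₀Icc.2 with h' | h'
    · exact h'
    · exact absurd (h' ▸ hus₀) (not_le.2 hneg)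
  -- on (s₀, t₁], u < 0
  have huneg : ∀ x, s₀ < x → x ≤ t₁ → u x < 0 := by
    intro x hx1 hx2
    by_contra hux
    push_neg at hux
    have : x ∈ S := ⟨⟨le_trans hs₀Icc.1 hx1.le, hx2⟩, hux⟩
    exact absurd (le_csSup hSbd this) (not_le.2 hx1)
  -- u s₀ ≤ 0 by continuity from the right
  have hus₀' : u s₀ ≤ 0 := by
    have hct : ContinuousWithinAt u (Set.Icc 0 t₁) s₀ := hcont s₀ hs₀Icc
    have hct2 : ContinuousWithinAt u (Set.Ioc s₀ t₁) s₀ :=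
      hct.mono (fun x hx => ⟨le_trans hs₀Icc.1 hx.1.le, hx.2⟩)
    haveI hne : (nhdsWithin s₀ (Set.Ioc s₀ t₁)).NeBot := by
      rw [nhdsWithin_Ioc_eq_nhdsGT hs₀lt]
      exact nhdsGT_neBot s₀
    refine le_of_tendsto hct2 ?_
    filter_upwards [self_mem_nhdsWithin] with x hx
    exact (huneg x hx.1 hx.2).le
  -- consider g = u * exp(-C t), monotone on [s₀, t₁]
  have hsub : Set.Icc s₀ t₁ ⊆ Set.Ico 0 b := fun x hx =>
    ⟨le_trans hs₀Icc.1 hx.1, lt_of_le_of_lt hx.2 ht₁.2⟩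
  have hmono : MonotoneOn (fun t => u t * Real.exp (-C * t)) (Set.Icc s₀ t₁) := by
    apply monoOn_Icc_of_hasDeriv
      (f' := fun t => u' t * Real.exp (-C * t) + u t * (-C * Real.exp (-C * t)))
    · intro x hx
      exact ((hd x (hsub hx)).mono hsub).mul
        (((Real.hasDerivAt_exp (-C * x)).comp x
          ((hasDerivAt_id x).const_mul (-C))).hasDerivWithinAt.mono hsub
        |>.congr_deriv (by ring))
    · intro x hx
      have hux : u x ≤ 0 := (huneg x hx.1 hx.2.le).le
      have hCu : C * u x ≤ u' x := h x (hsub ⟨hx.1.le, hx.2.le⟩) hux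
      have hexp : 0 < Real.exp (-C * x) := Real.exp_pos _
      nlinarith
  have := hmono ⟨le_refl s₀, hs₀lt.le⟩ ⟨hs₀lt.le, le_refl t₁⟩ hs₀lt.le
  simp only at this
  nlinarith [Real.exp_pos (-C * s₀), Real.exp_pos (-C * t₁),
    mul_nonneg hus₀ (Real.exp_pos (-C * s₀)).le]

set_option maxHeartbeats 2000000 in
/-- For every K > 0, if y and z solve the isolated-vertex and susceptibility ODEs
of the biased process G∧_K on [0, b) with y(0) = z(0) = 1 and 0 ≤ y ≤ 1, then
b < 5; i.e. the giant-component threshold t∧_g(K) is less than 5. -/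
theorem singularity_lt_five (K b : ℝ) (hK : 0 < K) (hb : 0 < b)
    (y z : ℝ → ℝ) (hy0 : y 0 = 1) (hz0 : z 0 = 1)
    (hyb : ∀ t ∈ Set.Ico (0:ℝ) b, 0 ≤ y t ∧ y t ≤ 1)
    (hyd : ∀ t ∈ Set.Ico (0:ℝ) b,
      HasDerivWithinAt y (-(y t) / (1 + (K - 1) * (1 - y t) ^ 2)) (Set.Ico 0 b) t)
    (hzd : ∀ t ∈ Set.Ico (0:ℝ) b,
      HasDerivWithinAt z
        ((z t ^ 2 + (K - 1) * (z t - y t) ^ 2) / (1 + (K - 1) * (1 - y t) ^ 2))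
        (Set.Ico 0 b) t) :
    b < 5 := by
  by_contra hlt
  push_neg at hlt
  have I4 : Set.Icc (0:ℝ) 4 ⊆ Set.Ico 0 b := fun x hx => ⟨hx.1, by
    have := hx.2; linarith⟩
  -- positivity of the denominator
  have hDpos : ∀ t ∈ Set.Ico (0:ℝ) b, 0 < 1 + (K - 1) * (1 - y t) ^ 2 := by
    intro t ht
    obtain ⟨h0, h1⟩ := hyb t ht
    rcases le_or_gt 1 K with h | h
    · nlinarith [sq_nonneg (1 - y t)]
    · nlinarith [mul_nonneg (by linarith : (0:ℝ) ≤ 1 - K)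
        (mul_nonneg h0 (by linarith : (0:ℝ) ≤ 2 - y t))]
  -- z ≥ y on [0, b)
  have hzy : ∀ t ∈ Set.Ico (0:ℝ) b, 0 ≤ z t - y t := by
    apply stay_nonneg (C := 2 / K)
      (u' := fun t => (z t ^ 2 + (K - 1) * (z t - y t) ^ 2) /
        (1 + (K - 1) * (1 - y t) ^ 2) - -(y t) / (1 + (K - 1) * (1 - y t) ^ 2))
    · intro t ht
      exact (hzd t ht).sub (hyd t ht)
    · rw [hy0, hz0]; norm_num
    · intro t ht hu
      obtain ⟨hy0', hy1'⟩ := hyb t ht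
      have hD := hDpos t ht
      have h1 : (z t ^ 2 + (K - 1) * (z t - y t) ^ 2) /
          (1 + (K - 1) * (1 - y t) ^ 2) - -(y t) / (1 + (K - 1) * (1 - y t) ^ 2)
          = (z t ^ 2 + (K - 1) * (z t - y t) ^ 2 + y t) /
          (1 + (K - 1) * (1 - y t) ^ 2) := by ring
      rw [h1, le_div_iff₀ hD,
        show 2 / K * (z t - y t) * (1 + (K - 1) * (1 - y t) ^ 2)
          = 2 * (z t - y t) * (1 + (K - 1) * (1 - y t) ^ 2) / K by ring,
        div_le_iff₀ hK]
      rcases le_or_gt K 1 with hK1 | hK1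
      · have hDK : K ≤ 1 + (K - 1) * (1 - y t) ^ 2 := by
          nlinarith [mul_nonneg (by linarith : (0:ℝ) ≤ 1 - K)
            (mul_nonneg hy0' (by linarith : (0:ℝ) ≤ 2 - y t))]
        have hKy : K * y t ≤ K := by nlinarith
        have hterm : 0 ≤ (-(2 * (z t - y t))) *
            ((1 + (K - 1) * (1 - y t) ^ 2) - K * y t) :=
          mul_nonneg (by linarith) (by linarith)
        nlinarith [hterm, sq_nonneg (K * (z t - y t)),
          mul_nonneg hK.le (sq_nonneg (y t)), mul_nonneg hK.le hy0']
      · have hA : 0 ≤ z t ^ 2 + (K - 1) * (z t - y t) ^ 2 := by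
          nlinarith [sq_nonneg (z t),
            mul_nonneg (by linarith : (0:ℝ) ≤ K - 1) (sq_nonneg (z t - y t))]
        nlinarith [mul_nonneg hK.le hA, mul_nonneg hK.le hy0',
          mul_nonneg (by linarith : (0:ℝ) ≤ -(z t - y t)) hD.le]
  -- z is monotone on [0,4]
  have zmono : MonotoneOn z (Set.Icc (0:ℝ) 4) := by
    apply monoOn_Icc_of_hasDeriv (f' := fun t =>
      (z t ^ 2 + (K - 1) * (z t - y t) ^ 2) / (1 + (K - 1) * (1 - y t) ^ 2))
    · intro t ht
      exact (hzd t (I4 ht)).mono I4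
    · intro t ht
      have ht' := I4 (Set.Ioo_subset_Icc_self ht)
      obtain ⟨hy0', hy1'⟩ := hyb t ht'
      have hu := hzy t ht'
      have hD := hDpos t ht'
      apply div_nonneg _ hD.le
      nlinarith [mul_nonneg hK.le (sq_nonneg (z t - y t)),
        mul_nonneg hu hy0', sq_nonneg (y t)]
  have hz1 : ∀ t ∈ Set.Icc (0:ℝ) 4, 1 ≤ z t := by
    intro t ht
    have := zmono (Set.left_mem_Icc.2 (by norm_num)) ht ht.1
    rwa [hz0] at this
  -- z grows at least exponentially: z t ≥ exp t on [0,4]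
  have hzexp : ∀ t ∈ Set.Icc (0:ℝ) 4, Real.exp t ≤ z t := by
    have gmono : MonotoneOn (fun t => z t * Real.exp (-t)) (Set.Icc (0:ℝ) 4) := by
      apply monoOn_Icc_of_hasDeriv (f' := fun t =>
        (z t ^ 2 + (K - 1) * (z t - y t) ^ 2) / (1 + (K - 1) * (1 - y t) ^ 2)
          * Real.exp (-t) + z t * (Real.exp (-t) * -1))
      · intro t ht
        exact ((hzd t (I4 ht)).mono I4).mul
          (((Real.hasDerivAt_exp (-t)).comp t ((hasDerivAt_id t).neg)).hasDerivWithinAt)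
      · intro t ht
        have ht' := I4 (Set.Ioo_subset_Icc_self ht)
        obtain ⟨hy0', hy1'⟩ := hyb t ht'
        have hz1' := hz1 t (Set.Ioo_subset_Icc_self ht)
        have hD := hDpos t ht'
        have he := Real.exp_pos (-t)
        -- key: z' ≥ z, i.e. N ≥ z * D
        have hfac : 0 ≤ K * z t + (1 - K) * y t ^ 2 := by
          rcases le_or_gt K 1 with hK1 | hK1
          · nlinarith [mul_nonneg (by linarith : (0:ℝ) ≤ 1 - K) (sq_nonneg (y t))]
          · nlinarith [mul_nonneg hK.le (by linarith : (0:ℝ) ≤ z t - 1),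
              mul_nonneg (by linarith : (0:ℝ) ≤ K - 1)
                (by nlinarith : (0:ℝ) ≤ 1 - y t ^ 2)]
        have hkey : z t * (1 + (K - 1) * (1 - y t) ^ 2)
            ≤ z t ^ 2 + (K - 1) * (z t - y t) ^ 2 := by
          nlinarith [mul_nonneg (by linarith : (0:ℝ) ≤ z t - 1) hfac]
        have h2 : z t ≤ (z t ^ 2 + (K - 1) * (z t - y t) ^ 2) /
            (1 + (K - 1) * (1 - y t) ^ 2) := by
          rw [le_div_iff₀ hD]; exact hkey
        nlinarith [mul_le_mul_of_nonneg_right h2 he.le]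
    intro t ht
    have := gmono (Set.left_mem_Icc.2 (by norm_num)) ht ht.1
    simp only [neg_zero, Real.exp_zero, mul_one, hz0] at this
    calc Real.exp t = Real.exp t * 1 := by ring
      _ ≤ Real.exp t * (z t * Real.exp (-t)) :=
          mul_le_mul_of_nonneg_left this (Real.exp_pos t).le
      _ = z t * (Real.exp t * Real.exp (-t)) := by ring
      _ = z t := by rw [← Real.exp_add]; simp
  -- exp 3 ≥ 20
  have hexp3 : (20:ℝ) ≤ Real.exp 3 := by
    have h1 := Real.exp_one_gt_d9
    rw [show (3:ℝ) = 1 + 1 + 1 by norm_num, Real.exp_add, Real.exp_add]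
    nlinarith
  have hz20 : ∀ t ∈ Set.Icc (3:ℝ) 4, 20 ≤ z t := by
    intro t ht
    have h3 : (3:ℝ) ∈ Set.Icc (0:ℝ) 4 := by norm_num
    have htI : t ∈ Set.Icc (0:ℝ) 4 := ⟨by linarith [ht.1], ht.2⟩
    have := zmono h3 htI ht.1
    have h2 := hzexp 3 h3
    linarith
  -- for K ≤ 1 : y t ≤ K on [3,4]
  have hyK : K ≤ 1 → ∀ t ∈ Set.Icc (3:ℝ) 4, y t ≤ K := by
    intro hK1
    have ypos : ∀ t ∈ Set.Icc (0:ℝ) 4, 0 < y t := by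
      have fmono : MonotoneOn (fun t => y t * Real.exp (t / K)) (Set.Icc (0:ℝ) 4) := by
        apply monoOn_Icc_of_hasDeriv (f' := fun t =>
          -(y t) / (1 + (K - 1) * (1 - y t) ^ 2) * Real.exp (t / K)
            + y t * (Real.exp (t / K) * (1 / K)))
        · intro t ht
          exact ((hyd t (I4 ht)).mono I4).mul
            (by
              have h : HasDerivAt (fun t => Real.exp (t / K)) (Real.exp (t / K) * (1 / K)) t :=
                ((hasDerivAt_id' t).div_const K).exp
              exact h.hasDerivWithinAt)
        · intro t ht
          have ht' := I4 (Set.Ioo_subset_Icc_self ht)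
          obtain ⟨hy0', hy1'⟩ := hyb t ht'
          have hD := hDpos t ht'
          have hDK : K ≤ 1 + (K - 1) * (1 - y t) ^ 2 := by
            nlinarith [mul_nonneg (by linarith : (0:ℝ) ≤ 1 - K)
              (mul_nonneg hy0' (by linarith : (0:ℝ) ≤ 2 - y t))]
          have he := Real.exp_pos (t / K)
          have h0 : 0 ≤ y t / K - y t / (1 + (K - 1) * (1 - y t) ^ 2) := by
            rw [sub_nonneg, div_le_div_iff₀ hD hK]
            nlinarith [mul_nonneg hy0' (sub_nonneg.2 hDK)]
          have h2 := mul_nonneg he.le h0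
          ring_nf at h2 ⊢
          linarith
      intro t ht
      have h := fmono (Set.left_mem_Icc.2 (by norm_num)) ht ht.1
      simp only [hy0, zero_div, Real.exp_zero, mul_one, one_mul] at h
      nlinarith [Real.exp_pos (t / K)]
    have hlogest : ∀ t ∈ Set.Icc (0:ℝ) 4, K * Real.log (y t) + 2 * y t + t ≤ 2 := by
      have amono : MonotoneOn
          (fun t => -(K * Real.log (y t) + (2 * y t + t))) (Set.Icc (0:ℝ) 4) := by
        apply monoOn_Icc_of_hasDeriv (f' := fun t =>
          -(K * ((y t)⁻¹ * (-(y t) / (1 + (K - 1) * (1 - y t) ^ 2)))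
            + (2 * (-(y t) / (1 + (K - 1) * (1 - y t) ^ 2)) + 1)))
        · intro t ht
          have hy := (ypos t ht).ne'
          exact ((((Real.hasDerivAt_log hy).comp_hasDerivWithinAt t
            ((hyd t (I4 ht)).mono I4)).const_mul K).add
            ((((hyd t (I4 ht)).mono I4).const_mul 2).add
              (hasDerivWithinAt_id t _))).neg
        · intro t ht
          have htI := Set.Ioo_subset_Icc_self ht
          have ht' := I4 htI
          obtain ⟨hy0', hy1'⟩ := hyb t ht'
          have hD := hDpos t ht'
          have hyp := ypos t htI
          have e1 : K * ((y t)⁻¹ * (-(y t) / (1 + (K - 1) * (1 - y t) ^ 2)))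
              = -(K / (1 + (K - 1) * (1 - y t) ^ 2)) := by
            field_simp
          have e2 : 2 * (-(y t) / (1 + (K - 1) * (1 - y t) ^ 2))
              = -(2 * y t / (1 + (K - 1) * (1 - y t) ^ 2)) := by ring
          have hle : 1 + (K - 1) * (1 - y t) ^ 2 ≤ K + 2 * y t := by
            nlinarith [mul_nonneg hy0' (by nlinarith : (0:ℝ) ≤ K * (2 - y t) + y t)]
          have h2 : 1 ≤ (K + 2 * y t) / (1 + (K - 1) * (1 - y t) ^ 2) :=
            (one_le_div hD).2 hle
          have h3 : K / (1 + (K - 1) * (1 - y t) ^ 2)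
              + 2 * y t / (1 + (K - 1) * (1 - y t) ^ 2)
              = (K + 2 * y t) / (1 + (K - 1) * (1 - y t) ^ 2) := by ring
          rw [e1, e2]
          linarith
      intro t ht
      have h := amono (Set.left_mem_Icc.2 (by norm_num)) ht ht.1
      simp only [hy0, Real.log_one, mul_zero, mul_one, add_zero, zero_add] at h
      linarith
    intro t ht
    have htI : t ∈ Set.Icc (0:ℝ) 4 := ⟨by linarith [ht.1], ht.2⟩
    obtain ⟨hy0', hy1'⟩ := hyb t (I4 htI)
    have hyp := ypos t htI
    have h1 := hlogest t htI
    have hlog : Real.log (y t) ≤ (2 - t) / K := by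
      rw [le_div_iff₀ hK]; nlinarith
    have h2 : y t ≤ Real.exp ((2 - t) / K) := by
      rw [← Real.exp_log hyp]; exact Real.exp_le_exp.2 hlog
    have h4 : Real.exp ((2 - t) / K) ≤ K := by
      conv_rhs => rw [← Real.exp_log hK]
      rw [Real.exp_le_exp, div_le_iff₀ hK]
      have hl := Real.log_le_sub_one_of_pos (show (0:ℝ) < K⁻¹ by positivity)
      rw [Real.log_inv] at hl
      nlinarith [mul_le_mul_of_nonneg_left hl hK.le, mul_inv_cancel₀ hK.ne',
        ht.1]
    linarith
  -- key inequality on (3,4): z² D ≤ 3 N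
  have key34 : ∀ t ∈ Set.Ioo (3:ℝ) 4, z t ^ 2 * (1 + (K - 1) * (1 - y t) ^ 2)
      ≤ 3 * (z t ^ 2 + (K - 1) * (z t - y t) ^ 2) := by
    intro t ht
    have htI : t ∈ Set.Icc (3:ℝ) 4 := Set.Ioo_subset_Icc_self ht
    have ht0 : t ∈ Set.Icc (0:ℝ) 4 := ⟨by linarith [ht.1.le], ht.2.le⟩
    have ht' := I4 ht0
    obtain ⟨hy0', hy1'⟩ := hyb t ht'
    have hu := hzy t ht'
    have hz20' := hz20 t htI
    rcases le_or_gt K 1 with hK1 | hK1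
    · have hyKt := hyK hK1 t htI
      have hD3K : 1 + (K - 1) * (1 - y t) ^ 2 ≤ 3 * K := by
        have hle : 1 + (K - 1) * (1 - y t) ^ 2 ≤ K + 2 * y t := by
          nlinarith [mul_nonneg hy0' (by nlinarith : (0:ℝ) ≤ K * (2 - y t) + y t)]
        linarith
      have hNK : K * z t ^ 2 ≤ z t ^ 2 + (K - 1) * (z t - y t) ^ 2 := by
        nlinarith [mul_nonneg (by linarith : (0:ℝ) ≤ 1 - K)
          (mul_nonneg hy0' (by linarith : (0:ℝ) ≤ 2 * (z t - y t) + y t))]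
      nlinarith [mul_le_mul_of_nonneg_left hD3K (sq_nonneg (z t))]
    · have hDK : 1 + (K - 1) * (1 - y t) ^ 2 ≤ K := by
        nlinarith [mul_nonneg (by linarith : (0:ℝ) ≤ K - 1)
          (mul_nonneg hy0' (by linarith : (0:ℝ) ≤ 2 - y t))]
      have hsq : (z t - 1) ^ 2 ≤ (z t - y t) ^ 2 := by
        nlinarith [mul_nonneg (by linarith : (0:ℝ) ≤ 1 - y t)
          (by linarith : (0:ℝ) ≤ 2 * z t - 1 - y t)]
      have h3z : z t ^ 2 ≤ 3 * (z t - 1) ^ 2 := by nlinarith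
      nlinarith [mul_le_mul_of_nonneg_left hDK (sq_nonneg (z t)),
        mul_nonneg (by linarith : (0:ℝ) ≤ K - 1) (sub_nonneg.2 (h3z.trans
          (by nlinarith : 3 * (z t - 1) ^ 2 ≤ 3 * (z t - y t) ^ 2)))]
  -- final contradiction via ψ = -(1/z) - t/3 monotone on [3,4]
  have hzpos : ∀ t ∈ Set.Icc (3:ℝ) 4, (0:ℝ) < z t := fun t ht => by
    linarith [hz20 t ht]
  have I34 : Set.Icc (3:ℝ) 4 ⊆ Set.Ico 0 b := fun x hx =>
    ⟨by linarith [hx.1], by linarith [hx.2]⟩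
  have bmono : MonotoneOn (fun t => -(z t)⁻¹ + -(1:ℝ) / 3 * t)
      (Set.Icc (3:ℝ) 4) := by
    apply monoOn_Icc_of_hasDeriv (f' := fun t =>
      -(-((z t ^ 2 + (K - 1) * (z t - y t) ^ 2) / (1 + (K - 1) * (1 - y t) ^ 2))
          / z t ^ 2) + -(1:ℝ) / 3 * 1)
    · intro t ht
      exact ((((hzd t (I34 ht)).mono I34).inv (hzpos t ht).ne')).neg.add
        (((hasDerivAt_id t).const_mul (-(1:ℝ) / 3)).hasDerivWithinAt)
    · intro t ht
      have htI := Set.Ioo_subset_Icc_self ht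
      have ht' := I34 htI
      have hD := hDpos t ht'
      have hzp := hzpos t htI
      have hkey := key34 t ht
      have hsq : (0:ℝ) < z t ^ 2 := by positivity
      have h1 : z t ^ 2 / 3 ≤ (z t ^ 2 + (K - 1) * (z t - y t) ^ 2)
          / (1 + (K - 1) * (1 - y t) ^ 2) := by
        rw [div_le_div_iff₀ (by norm_num) hD]; linarith
      have h2 : (1:ℝ) / 3 ≤ (z t ^ 2 + (K - 1) * (z t - y t) ^ 2)
          / (1 + (K - 1) * (1 - y t) ^ 2) / z t ^ 2 := by
        rw [le_div_iff₀ hsq]; nlinarith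
      ring_nf at h2 ⊢
      linarith
  have h34 := bmono (Set.left_mem_Icc.2 (by norm_num))
    (Set.right_mem_Icc.2 (by norm_num)) (by norm_num)
  simp only at h34
  have hz3 := hz20 3 (by norm_num)
  have hz4 := hzpos 4 (by norm_num)
  have i3 : (z 3)⁻¹ ≤ 1 / 20 := by
    rw [inv_le_iff_one_le_mul₀ (by linarith)]
    nlinarith
  have i4 : 0 < (z 4)⁻¹ := inv_pos.2 hz4
  nlinarith [h34]
end

section
/- Let K ≥ 0, let G be a simple graph on a finite vertex set V with |V| = n, and let c be the number of isolated vertices of G. For an ordered pair (u,v) ∈ V × V, define w(u,v) = K if both u and v are non-isolated in G, and w(u,v) = 1 otherwise; for u ≠ v let G_{uv} be the graph obtained from G by adding the edge {u,v} (so G_{uv} = G if the edge is already present), and for u = v let G_{uv} = G. Then Σ_{(u,v)∈V×V} w(u,v) = n² + (K−1)·(n−c)², and Σ_{(u,v)∈V×V} w(u,v)·(iso(G) − iso(G_{uv})) = 2·c·(n−1), where iso(H) denotes the number of isolated vertices of the graph H. -/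
open scoped Classical in
/-- Exact one-step weight sums for the approximated biased process G̃∧_K: with
weight K on ordered pairs of non-isolated vertices and 1 otherwise, the total
weight is n² + (K−1)(n−c)², and the weighted sum of the decrease in the number
of isolated vertices is 2c(n−1). -/
theorem weighted_isolated_drift {V : Type*} [Fintype V] [DecidableEq V]
    (K : ℝ) (hK : 0 ≤ K) (G : SimpleGraph V) (n c : ℕ)
    (hn : Fintype.card V = n)
    (hc : c = {v : V | ∀ x, ¬ G.Adj v x}.ncard)
    (w : V → V → ℝ)
    (hw : ∀ u v, w u v =
      if (¬ ∀ x, ¬ G.Adj u x) ∧ (¬ ∀ x, ¬ G.Adj v x) then K else 1)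
    (Gadd : V → V → SimpleGraph V)
    (hGadd : ∀ u v, Gadd u v = G ⊔ SimpleGraph.fromEdgeSet {s(u, v)}) :
    (∑ u : V, ∑ v : V, w u v) = (n : ℝ) ^ 2 + (K - 1) * ((n : ℝ) - c) ^ 2 ∧
    (∑ u : V, ∑ v : V, w u v *
        (({x : V | ∀ y, ¬ G.Adj x y}.ncard : ℝ)
          - ({x : V | ∀ y, ¬ (Gadd u v).Adj x y}.ncard : ℝ)))
      = 2 * (c : ℝ) * ((n : ℝ) - 1) := by
  subst hn
  set I : Set V := {v : V | ∀ x, ¬ G.Adj v x} with hIdef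
  set f : V → ℝ := fun x => if x ∈ I then 1 else 0 with hf
  have hsumf : ∑ u : V, f u = (c : ℝ) := by
    rw [hc, hf, Finset.sum_boole, Set.ncard_eq_toFinset_card', Set.toFinset_setOf]
    rfl
  have hsum1f : ∑ u : V, (1 - f u) = (Fintype.card V : ℝ) - c := by
    rw [Finset.sum_sub_distrib, hsumf]
    simp
  -- Part 1
  have h1 : (∑ u : V, ∑ v : V, w u v)
      = (Fintype.card V : ℝ) ^ 2 + (K - 1) * ((Fintype.card V : ℝ) - c) ^ 2 := by
    have hw' : ∀ u v : V, w u v = 1 + (K - 1) * ((1 - f u) * (1 - f v)) := by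
      intro u v
      have fu : f u = if (∀ x, ¬ G.Adj u x) then 1 else 0 := rfl
      have fv : f v = if (∀ x, ¬ G.Adj v x) then 1 else 0 := rfl
      rw [hw, fu, fv]
      by_cases hu : ∀ x, ¬ G.Adj u x <;> by_cases hv : ∀ x, ¬ G.Adj v x <;>
        simp [hu, hv] <;> ring
    calc ∑ u : V, ∑ v : V, w u v
        = ∑ u : V, ∑ v : V, (1 + (K - 1) * ((1 - f u) * (1 - f v))) :=
          Finset.sum_congr rfl fun u _ => Finset.sum_congr rfl fun v _ => hw' u v
      _ = ∑ u : V, ((Fintype.card V : ℝ) + (K - 1) * ((1 - f u) * ((Fintype.card V : ℝ) - c))) := by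
          refine Finset.sum_congr rfl fun u _ => ?_
          rw [Finset.sum_add_distrib]
          simp only [Finset.sum_const, Finset.card_univ, nsmul_eq_mul, mul_one]
          rw [← Finset.mul_sum, ← Finset.mul_sum, hsum1f]
      _ = (Fintype.card V : ℝ) ^ 2 + (K - 1) * ((Fintype.card V : ℝ) - c) ^ 2 := by
          rw [Finset.sum_add_distrib]
          simp only [Finset.sum_const, Finset.card_univ, nsmul_eq_mul, mul_one]
          rw [← Finset.mul_sum, ← Finset.sum_mul, hsum1f]
          ring
  refine ⟨h1, ?_⟩
  -- Part 2
  have key : ∀ u v : V, w u v *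
      ((I.ncard : ℝ) - ({x : V | ∀ y, ¬ (Gadd u v).Adj x y}.ncard : ℝ))
      = if u = v then 0 else f u + f v := by
    intro u v
    rw [hGadd]
    by_cases huv : u = v
    · subst huv
      have hset : {x : V | ∀ y, ¬ (G ⊔ SimpleGraph.fromEdgeSet {s(u, u)}).Adj x y} = I := by
        ext x
        simp only [Set.mem_setOf_eq, SimpleGraph.sup_adj, SimpleGraph.fromEdgeSet_adj,
          Set.mem_singleton_iff, Sym2.eq_iff, hIdef]
        constructor
        · intro h y hG
          exact h y (Or.inl hG)
        · intro h y hy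
          rcases hy with hG | ⟨hm, hne⟩
          · exact h y hG
          · rcases hm with ⟨rfl, rfl⟩ | ⟨rfl, rfl⟩ <;> exact hne rfl
      rw [hset]
      simp
    · have hset : {x : V | ∀ y, ¬ (G ⊔ SimpleGraph.fromEdgeSet {s(u, v)}).Adj x y}
          = I \ {u, v} := by
        ext x
        simp only [Set.mem_setOf_eq, SimpleGraph.sup_adj, SimpleGraph.fromEdgeSet_adj,
          Set.mem_singleton_iff, Sym2.eq_iff, not_or, Set.mem_diff, Set.mem_insert_iff,
          hIdef, forall_and]
        constructor
        · rintro ⟨hG, hE⟩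
          refine ⟨hG, ?_, ?_⟩
          · rintro rfl
            exact hE v ⟨Or.inl ⟨rfl, rfl⟩, huv⟩
          · rintro rfl
            exact hE u ⟨Or.inr ⟨rfl, rfl⟩, fun h => huv h.symm⟩
        · rintro ⟨hG, hxu, hxv⟩
          refine ⟨hG, fun y => ?_⟩
          rintro ⟨⟨rfl, rfl⟩ | ⟨rfl, rfl⟩, hne⟩
          · exact hxu rfl
          · exact hxv rfl
      rw [hset]
      have hfin : I.Finite := Set.toFinite I
      have hcard : (I ∩ {u, v}).ncard + (I \ {u, v}).ncard = I.ncard :=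
        Set.ncard_inter_add_ncard_diff_eq_ncard I {u, v} hfin
      have hdiff : (I.ncard : ℝ) - ((I \ {u, v}).ncard : ℝ) = ((I ∩ {u, v}).ncard : ℝ) := by
        rw [← hcard]; push_cast; ring
      rw [hdiff]
      by_cases hu : u ∈ I <;> by_cases hv : v ∈ I
      · have hIuv : I ∩ {u, v} = {u, v} := by
          apply Set.inter_eq_self_of_subset_right
          rintro x (rfl | rfl) <;> assumption
        have hwv : w u v = 1 := by
          rw [hw, if_neg]; rintro ⟨h1', _⟩; exact h1' hu
        rw [hIuv, Set.ncard_pair huv, hwv]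
        simp only [hf, hu, hv, if_pos, if_neg huv]
        norm_num
      · have hIuv : I ∩ {u, v} = {u} := by
          ext x
          simp only [Set.mem_inter_iff, Set.mem_insert_iff, Set.mem_singleton_iff]
          constructor
          · rintro ⟨hxI, hx⟩
            rcases hx with rfl | rfl
            · rfl
            · exact absurd hxI hv
          · rintro rfl
            exact ⟨hu, Or.inl rfl⟩
        have hwv : w u v = 1 := by
          rw [hw, if_neg]; rintro ⟨h1', _⟩; exact h1' hu
        rw [hIuv, Set.ncard_singleton, hwv]
        simp only [hf, hu, hv, if_pos, if_neg huv]
        norm_num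
      · have hIuv : I ∩ {u, v} = {v} := by
          ext x
          simp only [Set.mem_inter_iff, Set.mem_insert_iff, Set.mem_singleton_iff]
          constructor
          · rintro ⟨hxI, hx⟩
            rcases hx with rfl | rfl
            · exact absurd hxI hu
            · rfl
          · rintro rfl
            exact ⟨hv, Or.inr rfl⟩
        have hwv : w u v = 1 := by
          rw [hw, if_neg]; rintro ⟨_, h2'⟩; exact h2' hv
        rw [hIuv, Set.ncard_singleton, hwv]
        simp only [hf, hu, hv, if_pos, if_neg huv]
        norm_num
      · have hIuv : I ∩ {u, v} = ∅ := by
          ext x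
          simp only [Set.mem_inter_iff, Set.mem_insert_iff, Set.mem_singleton_iff,
            Set.mem_empty_iff_false, iff_false, not_and, not_or]
          intro hxI
          constructor
          · rintro rfl; exact hu hxI
          · rintro rfl; exact hv hxI
        rw [hIuv, Set.ncard_empty]
        simp [hf, hu, hv, huv]
  have hcI : ({x : V | ∀ y, ¬ G.Adj x y}.ncard : ℝ) = (I.ncard : ℝ) := by rw [hIdef]
  calc (∑ u : V, ∑ v : V, w u v *
        (({x : V | ∀ y, ¬ G.Adj x y}.ncard : ℝ)
          - ({x : V | ∀ y, ¬ (Gadd u v).Adj x y}.ncard : ℝ)))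
      = ∑ u : V, ∑ v : V, (if u = v then 0 else f u + f v) := by
        refine Finset.sum_congr rfl fun u _ => Finset.sum_congr rfl fun v _ => ?_
        rw [hcI]; exact key u v
    _ = ∑ u : V, (((Fintype.card V : ℝ) * f u + c) - 2 * f u) := by
        refine Finset.sum_congr rfl fun u _ => ?_
        have hpt : ∀ v : V, (if u = v then (0:ℝ) else f u + f v)
            = (f u + f v) - (if u = v then f u + f v else 0) := by
          intro v; by_cases h : u = v <;> simp [h]
        rw [Finset.sum_congr rfl fun v _ => hpt v, Finset.sum_sub_distrib,
          Finset.sum_add_distrib, Finset.sum_ite_eq, hsumf]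
        simp only [Finset.mem_univ, if_true, Finset.sum_const, Finset.card_univ, nsmul_eq_mul]
        ring
    _ = 2 * (c : ℝ) * ((Fintype.card V : ℝ) - 1) := by
        rw [Finset.sum_sub_distrib, Finset.sum_add_distrib]
        simp only [← Finset.mul_sum, hsumf, Finset.sum_const, Finset.card_univ, nsmul_eq_mul]
        ring
end
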